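/- Let n ≥ 2 and 2 ≤ k ≤ n be integers, and let E_{n−k} ∈ ℚ[X] be the polynomial such that Σ_{j=0}^∞ (j+1)^{n−k} x^j = E_{n−k}(x)/(1−x)^{n−k+1} for all real x with |x| < 1. Then the function (x₁, …, xₙ) ↦ E_{n−k}(x₁⋯xₙ)/(1 − x₁⋯xₙ)^{n−k+1} is Lebesgue-integrable on the open unit cube (0,1)ⁿ and ∫_{(0,1)ⁿ} E_{n−k}(x₁⋯xₙ)/(1 − x₁⋯xₙ)^{n−k+1} dx₁⋯dxₙ = ζ(k), where ζ(k) = Σ_{m=1}^∞ m^{−k} is the value of the Riemann zeta function at k. -/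

import Mathlib

open MeasureTheory

/-- The open unit cube `(0,1)^n` in `ℝ^n`. -/
def unitCube (n : ℕ) : Set (Fin n → ℝ) := Set.univ.pi fun _ => Set.Ioo (0 : ℝ) 1

/-- Summability of `(j+1)^m * t^j` for `0 ≤ t < 1`. -/
lemma aux_summable (m : ℕ) {t : ℝ} (h0 : 0 ≤ t) (h1 : t < 1) :
    Summable fun j : ℕ => ((j : ℝ) + 1) ^ m * t ^ j := by
  rcases eq_or_lt_of_le h0 with h | h
  · apply summable_of_ne_finset_zero (s := {0})
    intro j hj
    simp only [Finset.mem_singleton] at hj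
    rw [← h, zero_pow hj, mul_zero]
  · have hnorm : ‖t‖ < 1 := by rwa [Real.norm_eq_abs, abs_of_pos h]
    have hs : Summable fun j : ℕ => (j : ℝ) ^ m * t ^ j :=
      summable_pow_mul_geometric_of_norm_lt_one m hnorm
    have hs2 : Summable ((fun j : ℕ => (j : ℝ) ^ m * t ^ j) ∘ (· + 1)) :=
      hs.comp_injective (add_left_injective 1)
    have hs3 := hs2.mul_left t⁻¹
    refine hs3.congr fun j => ?_
    have ht : t ≠ 0 := ne_of_gt h
    simp only [Function.comp_apply, Nat.cast_add, Nat.cast_one, pow_succ]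
    field_simp

lemma aux_int_pow (j : ℕ) :
    (∫ y in Set.Ioo (0 : ℝ) 1, y ^ j) = 1 / ((j : ℝ) + 1) := by
  rw [← integral_Ioc_eq_integral_Ioo, ← intervalIntegral.integral_of_le (by norm_num : (0:ℝ) ≤ 1),
    integral_pow]
  simp

lemma aux_intOn_pow (j : ℕ) : IntegrableOn (fun y : ℝ => y ^ j) (Set.Ioo (0 : ℝ) 1) :=
  ((continuous_pow j).integrableOn_Icc (a := (0:ℝ)) (b := 1)).mono_set Set.Ioo_subset_Icc_self

theorem stmt4 (n k : ℕ) (hn : 2 ≤ n) (hk2 : 2 ≤ k) (hkn : k ≤ n) (E : Polynomial ℚ)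
    (hE : ∀ x : ℝ, |x| < 1 →
      (∑' j : ℕ, ((j : ℝ) + 1) ^ (n - k) * x ^ j)
        = Polynomial.aeval x E / (1 - x) ^ (n - k + 1)) :
    IntegrableOn
      (fun x : Fin n → ℝ => Polynomial.aeval (∏ i, x i) E / (1 - ∏ i, x i) ^ (n - k + 1))
      (unitCube n) ∧
    (∫ x in unitCube n, Polynomial.aeval (∏ i, x i) E / (1 - ∏ i, x i) ^ (n - k + 1))
      = ∑' m : ℕ, 1 / ((m : ℝ) + 1) ^ k := by
  set m := n - k with hm
  have hmk : m + k = n := Nat.sub_add_cancel hkn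
  set F : (Fin n → ℝ) → ℝ :=
    fun x => Polynomial.aeval (∏ i, x i) E / (1 - ∏ i, x i) ^ (m + 1) with hF
  set g : ℕ → ℝ → ℝ := fun j => (Set.Ioo (0:ℝ) 1).indicator fun y => y ^ j with hg
  set f : ℕ → (Fin n → ℝ) → ℝ :=
    fun j x => ((j : ℝ) + 1) ^ m * ∏ i, g j (x i) with hf
  -- cube membership facts
  have hcube : ∀ x : Fin n → ℝ, x ∈ unitCube n ↔ ∀ i, x i ∈ Set.Ioo (0:ℝ) 1 := by
    intro x; simp [unitCube, Set.mem_pi]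
  have hcube_meas : MeasurableSet (unitCube n) :=
    MeasurableSet.univ_pi fun _ => measurableSet_Ioo
  -- pointwise values of f
  have hfval : ∀ (j : ℕ) (x : Fin n → ℝ), x ∈ unitCube n →
      f j x = ((j : ℝ) + 1) ^ m * (∏ i, x i) ^ j := by
    intro j x hx
    rw [hf]
    simp only
    congr 1
    rw [← Finset.prod_pow]
    exact Finset.prod_congr rfl fun i _ => Set.indicator_of_mem ((hcube x).1 hx i) _
  have hfzero : ∀ (j : ℕ) (x : Fin n → ℝ), x ∉ unitCube n → f j x = 0 := by
    intro j x hx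
    rw [hcube] at hx
    push_neg at hx
    obtain ⟨i, hi⟩ := hx
    rw [hf]
    simp only
    rw [Finset.prod_eq_zero (Finset.mem_univ i) (Set.indicator_of_notMem hi _), mul_zero]
  -- product in (0,1) on the cube
  have hprod : ∀ x : Fin n → ℝ, x ∈ unitCube n →
      0 < (∏ i, x i) ∧ (∏ i, x i) < 1 := by
    intro x hx
    rw [hcube] at hx
    have hpos : 0 < ∏ i, x i := Finset.prod_pos fun i _ => (hx i).1
    have i0 : Fin n := ⟨0, by omega⟩
    refine ⟨hpos, ?_⟩
    calc ∏ i, x i ≤ x i0 := by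
          rw [← Finset.prod_erase_mul Finset.univ x (Finset.mem_univ i0)]
          nth_rewrite 2 [← one_mul (x i0)]
          apply mul_le_mul_of_nonneg_right _ (hx i0).1.le
          exact Finset.prod_le_one (fun i _ => (hx i).1.le) (fun i _ => (hx i).2.le)
      _ < 1 := (hx i0).2
  -- key pointwise identity
  have hkey : ∀ x : Fin n → ℝ, (unitCube n).indicator F x = ∑' j, f j x := by
    intro x
    by_cases hx : x ∈ unitCube n
    · rw [Set.indicator_of_mem hx]
      obtain ⟨h0, h1⟩ := hprod x hx
      have habs : |∏ i, x i| < 1 := by rw [abs_of_pos h0]; exact h1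
      rw [hF]
      simp only
      rw [← hE _ habs]
      exact tsum_congr fun j => (hfval j x hx).symm
    · rw [Set.indicator_of_notMem hx]
      rw [tsum_congr fun j => hfzero j x hx]
      simp
  -- pointwise summability
  have hsum_pt : ∀ x : Fin n → ℝ, Summable fun j => f j x := by
    intro x
    by_cases hx : x ∈ unitCube n
    · obtain ⟨h0, h1⟩ := hprod x hx
      exact (aux_summable m h0.le h1).congr fun j => (hfval j x hx).symm
    · exact (summable_zero.congr fun j => (hfzero j x hx).symm)
  -- integrability of g and f
  have hgint : ∀ j, Integrable (g j) := by
    intro j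
    rw [hg]
    exact (integrable_indicator_iff measurableSet_Ioo).mpr (aux_intOn_pow j)
  have hgval : ∀ j, (∫ y, g j y) = 1 / ((j : ℝ) + 1) := by
    intro j
    rw [hg]
    simp only
    rw [integral_indicator measurableSet_Ioo]
    exact aux_int_pow j
  have hfint : ∀ j, Integrable (f j) := by
    intro j
    exact (Integrable.fintype_prod (𝕜 := ℝ) fun _ : Fin n => hgint j).const_mul _
  have hfnonneg : ∀ j x, 0 ≤ f j x := by
    intro j x
    rw [hf]
    simp only
    apply mul_nonneg (by positivity)
    apply Finset.prod_nonneg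
    intro i _
    rw [hg]
    exact Set.indicator_nonneg (fun y hy => pow_nonneg hy.1.le j) _
  have hfintval : ∀ j, (∫ x, f j x) = 1 / ((j : ℝ) + 1) ^ k := by
    intro j
    rw [hf]
    simp only
    rw [integral_const_mul, integral_fintype_prod_volume_eq_pow (g j), hgval j]
    rw [Fintype.card_fin]
    have hc : ((j : ℝ) + 1) ≠ 0 := by positivity
    rw [div_pow, one_pow, ← hmk, pow_add]
    field_simp
  -- summability of the series of integrals
  have hS : Summable fun j : ℕ => 1 / ((j : ℝ) + 1) ^ k := by
    have h1 : Summable fun j : ℕ => 1 / (j : ℝ) ^ k :=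
      Real.summable_one_div_nat_pow.mpr (by omega)
    have h2 := (summable_nat_add_iff 1).mpr h1
    exact h2.congr fun j => by push_cast; ring_nf
  have hSnorm : Summable fun j : ℕ => ∫ x, ‖f j x‖ := by
    refine hS.congr fun j => ?_
    rw [← hfintval j]
    exact integral_congr_ae (Filter.Eventually.of_forall fun x =>
      (Real.norm_of_nonneg (hfnonneg j x)).symm)
  -- the indicator function equals the tsum
  have hind_eq : (unitCube n).indicator F = fun x => ∑' j, f j x := funext hkey
  -- measurability of F
  have hFmeas : Measurable F := by
    rw [hF]
    have hp : Measurable fun x : Fin n → ℝ => ∏ i, x i :=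
      Finset.measurable_prod _ fun i _ => measurable_pi_apply i
    have h1 : Measurable fun x : Fin n → ℝ => (Polynomial.aeval (∏ i, x i) E : ℝ) := by
      have : Continuous fun y : ℝ => (Polynomial.aeval y E : ℝ) := by
        simp only [Polynomial.aeval_def, Polynomial.eval₂_eq_eval_map]
        exact (Polynomial.continuous _)
      exact this.measurable.comp hp
    exact h1.div (((measurable_const.sub hp).pow_const _))
  -- integrability
  have hGint : Integrable ((unitCube n).indicator F) := by
    constructor
    · exact (hFmeas.indicator hcube_meas).aestronglyMeasurable
    · rw [hasFiniteIntegral_iff_norm]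
      have heq : ∀ x, ENNReal.ofReal ‖(unitCube n).indicator F x‖
          = ∑' j, ENNReal.ofReal (f j x) := by
        intro x
        rw [hkey x, Real.norm_of_nonneg (tsum_nonneg fun j => hfnonneg j x),
          ENNReal.ofReal_tsum_of_nonneg (fun j => hfnonneg j x) (hsum_pt x)]
      rw [lintegral_congr fun x => heq x]
      rw [lintegral_tsum fun j => ((hfint j).aemeasurable.ennreal_ofReal)]
      have : ∀ j : ℕ, (∫⁻ x, ENNReal.ofReal (f j x)) = ENNReal.ofReal (1 / ((j:ℝ)+1) ^ k) := by
        intro j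
        rw [← ofReal_integral_eq_lintegral_ofReal (hfint j)
          (Filter.Eventually.of_forall (hfnonneg j)), hfintval j]
      rw [tsum_congr this, ← ENNReal.ofReal_tsum_of_nonneg (fun j => by positivity) hS]
      exact ENNReal.ofReal_lt_top
  constructor
  · exact (integrable_indicator_iff hcube_meas).mp hGint
  · rw [← integral_indicator hcube_meas]
    show (∫ x, (unitCube n).indicator F x) = _
    rw [integral_congr_ae (Filter.Eventually.of_forall hkey),
      ← integral_tsum_of_summable_integral_norm hfint hSnorm]
    exact tsum_congr hfintval
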